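/- arXiv:1101.6069 — 5 statements merged into one kernel-verified Lean document; each statement's English description precedes it below -/
import Mathlib

section
/- If Δ₁ + Δ₂ ≥ 4U, then H(η) ≥ 0 for every configuration η : Λ → {0,1,2}; in particular, the empty configuration □ is a global minimum of the Hamiltonian H. -/
open Finset
open scoped Classical

/-- Nearest-neighbor adjacency on ℤ² (Euclidean distance 1). -/
def adj (x y : ℤ × ℤ) : Prop := |x.1 - y.1| + |x.2 - y.2| = 1

instance : DecidableRel adj := fun x y => by unfold adj; infer_instance

/-- Internal boundary ∂⁻Λ = {x ∈ Λ : ∃ y ∉ Λ, |x−y| = 1}. -/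
noncomputable def intBdry (Λ : Finset (ℤ × ℤ)) : Finset (ℤ × ℤ) :=
  Λ.filter fun x => ∃ y, y ∉ Λ ∧ adj x y

/-- Λ⁻ = Λ ∖ ∂⁻Λ. -/
noncomputable def lamMinus (Λ : Finset (ℤ × ℤ)) : Finset (ℤ × ℤ) := Λ \ intBdry Λ

/-- Number of particles of type `i` in `η` (inside Λ). -/
def nPart (Λ : Finset (ℤ × ℤ)) (η : ℤ × ℤ → Fin 3) (i : Fin 3) : ℕ :=
  (Λ.filter fun x => η x = i).card

/-- Twice the number of active bonds: ordered pairs (x,y), x,y ∈ Λ⁻, |x−y| = 1,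
    η(x)·η(y) = 2. -/
noncomputable def bondCount (Λ : Finset (ℤ × ℤ)) (η : ℤ × ℤ → Fin 3) : ℕ :=
  (((lamMinus Λ) ×ˢ (lamMinus Λ)).filter
    fun p => adj p.1 p.2 ∧ (η p.1 : ℕ) * (η p.2 : ℕ) = 2).card

/-- B(η): number of unordered active bonds. -/
noncomputable def activeBonds (Λ : Finset (ℤ × ℤ)) (η : ℤ × ℤ → Fin 3) : ℕ :=
  bondCount Λ η / 2

/-- Hamiltonian H(η) = Δ₁ n₁(η) + Δ₂ n₂(η) − U B(η). -/
noncomputable def ham (U Δ₁ Δ₂ : ℝ) (Λ : Finset (ℤ × ℤ)) (η : ℤ × ℤ → Fin 3) : ℝ :=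
  Δ₁ * (nPart Λ η 1 : ℝ) + Δ₂ * (nPart Λ η 2 : ℝ) - U * (activeBonds Λ η : ℝ)

section Aux

lemma adj_symm' {x y : ℤ × ℤ} (h : adj x y) : adj y x := by
  unfold adj at *
  rw [abs_sub_comm y.1 x.1, abs_sub_comm y.2 x.2]
  exact h

lemma adj_mem {x y : ℤ × ℤ} (h : adj x y) :
    y - x ∈ ({((1:ℤ),(0:ℤ)), (-1,0), (0,1), (0,-1)} : Finset (ℤ × ℤ)) := by
  unfold adj at h
  have h1 : (x.1 - y.1).natAbs + (x.2 - y.2).natAbs = 1 := by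
    rw [Int.abs_eq_natAbs, Int.abs_eq_natAbs] at h
    exact_mod_cast h
  simp only [Finset.mem_insert, Finset.mem_singleton, Prod.ext_iff, Prod.fst_sub, Prod.snd_sub]
  omega

lemma bondCount_le (Λ : Finset (ℤ × ℤ)) (η : ℤ × ℤ → Fin 3) (i : Fin 3)
    (hi : (i : ℕ) = 1 ∨ (i : ℕ) = 2) : bondCount Λ η ≤ 8 * nPart Λ η i := by
  classical
  unfold bondCount
  set S := (((lamMinus Λ) ×ˢ (lamMinus Λ)).filter
    fun p => adj p.1 p.2 ∧ (η p.1 : ℕ) * (η p.2 : ℕ) = 2) with hS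
  set D : Finset (ℤ × ℤ) := {(1,0), (-1,0), (0,1), (0,-1)} with hD
  set T := (Λ.filter fun x => η x = i) ×ˢ D with hT
  have hDcard : D.card = 4 := by decide
  have hTcard : T.card = nPart Λ η i * 4 := by
    rw [hT, Finset.card_product, hDcard]; rfl
  have hSub : ∀ p ∈ S, p.1 ∈ Λ ∧ p.2 ∈ Λ ∧ adj p.1 p.2 ∧ (η p.1 = i ∨ η p.2 = i) := by
    intro p hp
    simp only [hS, Finset.mem_filter, Finset.mem_product] at hp
    obtain ⟨⟨hp1, hp2⟩, hadj, hprod⟩ := hp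
    have hp1' : p.1 ∈ Λ := (Finset.mem_sdiff.mp hp1).1
    have hp2' : p.2 ∈ Λ := (Finset.mem_sdiff.mp hp2).1
    refine ⟨hp1', hp2', hadj, ?_⟩
    have h1 := (η p.1).isLt
    have h2 := (η p.2).isLt
    have he1 : η p.1 = i ↔ (η p.1 : ℕ) = (i : ℕ) := ⟨fun h => by rw [h], Fin.ext⟩
    have he2 : η p.2 = i ↔ (η p.2 : ℕ) = (i : ℕ) := ⟨fun h => by rw [h], Fin.ext⟩
    rw [he1, he2]
    set a := (η p.1 : ℕ); set b := (η p.2 : ℕ)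
    interval_cases a <;> interval_cases b <;> omega
  have hsplit : S ⊆ (S.filter fun p => η p.1 = i) ∪ (S.filter fun p => η p.2 = i) := by
    intro p hp
    rcases (hSub p hp).2.2.2 with h | h
    · exact Finset.mem_union_left _ (Finset.mem_filter.mpr ⟨hp, h⟩)
    · exact Finset.mem_union_right _ (Finset.mem_filter.mpr ⟨hp, h⟩)
  have hc1 : (S.filter fun p => η p.1 = i).card ≤ T.card := by
    apply Finset.card_le_card_of_injOn (fun p => (p.1, p.2 - p.1))
    · intro p hp
      rw [Finset.mem_coe, Finset.mem_filter] at hp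
      obtain ⟨hpS, hpi⟩ := hp
      obtain ⟨h1, _, hadj, _⟩ := hSub p hpS
      rw [Finset.mem_coe, hT, Finset.mem_product]
      exact ⟨Finset.mem_filter.mpr ⟨h1, hpi⟩, adj_mem hadj⟩
    · intro p _ q _ h
      simp only [Prod.ext_iff, Prod.fst_sub, Prod.snd_sub] at h ⊢
      obtain ⟨⟨ha, hb⟩, hc, hd⟩ := h
      exact ⟨⟨ha, hb⟩, by omega, by omega⟩
  have hc2 : (S.filter fun p => η p.2 = i).card ≤ T.card := by
    apply Finset.card_le_card_of_injOn (fun p => (p.2, p.1 - p.2))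
    · intro p hp
      rw [Finset.mem_coe, Finset.mem_filter] at hp
      obtain ⟨hpS, hpi⟩ := hp
      obtain ⟨_, h2, hadj, _⟩ := hSub p hpS
      rw [Finset.mem_coe, hT, Finset.mem_product]
      exact ⟨Finset.mem_filter.mpr ⟨h2, hpi⟩, adj_mem (adj_symm' hadj)⟩
    · intro p _ q _ h
      simp only [Prod.ext_iff, Prod.fst_sub, Prod.snd_sub] at h ⊢
      obtain ⟨⟨ha, hb⟩, hc, hd⟩ := h
      exact ⟨⟨by omega, by omega⟩, ha, hb⟩
  calc S.card ≤ ((S.filter fun p => η p.1 = i) ∪ (S.filter fun p => η p.2 = i)).card :=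
        Finset.card_le_card hsplit
    _ ≤ (S.filter fun p => η p.1 = i).card + (S.filter fun p => η p.2 = i).card :=
        Finset.card_union_le _ _
    _ ≤ T.card + T.card := Nat.add_le_add hc1 hc2
    _ = 8 * nPart Λ η i := by rw [hTcard]; ring

lemma activeBonds_le (Λ : Finset (ℤ × ℤ)) (η : ℤ × ℤ → Fin 3) (i : Fin 3)
    (hi : (i : ℕ) = 1 ∨ (i : ℕ) = 2) : activeBonds Λ η ≤ 4 * nPart Λ η i := by
  have := bondCount_le Λ η i hi
  unfold activeBonds
  omega

end Aux

/-- If Δ₁ + Δ₂ ≥ 4U, then H(η) ≥ 0 for every configuration η;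
in particular the empty configuration □ is a global minimum of H. -/
theorem stmt_0 (U Δ₁ Δ₂ : ℝ) (hU : 0 < U) (hΔ₁ : 0 < Δ₁) (hΔ₂ : 0 < Δ₂)
    (hΔ : Δ₁ ≤ Δ₂) (Λ : Finset (ℤ × ℤ)) (h4U : Δ₁ + Δ₂ ≥ 4 * U) :
    (∀ η : ℤ × ℤ → Fin 3, 0 ≤ ham U Δ₁ Δ₂ Λ η) ∧
    (∀ η : ℤ × ℤ → Fin 3, ham U Δ₁ Δ₂ Λ (fun _ => 0) ≤ ham U Δ₁ Δ₂ Λ η) := by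
  have hmain : ∀ η : ℤ × ℤ → Fin 3, 0 ≤ ham U Δ₁ Δ₂ Λ η := by
    intro η
    have hB1 : (activeBonds Λ η : ℝ) ≤ 4 * (nPart Λ η 1 : ℝ) := by
      exact_mod_cast activeBonds_le Λ η 1 (Or.inl rfl)
    have hB2 : (activeBonds Λ η : ℝ) ≤ 4 * (nPart Λ η 2 : ℝ) := by
      exact_mod_cast activeBonds_le Λ η 2 (Or.inr rfl)
    have hn1 : (0:ℝ) ≤ (nPart Λ η 1 : ℝ) := Nat.cast_nonneg _
    have hn2 : (0:ℝ) ≤ (nPart Λ η 2 : ℝ) := Nat.cast_nonneg _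
    have hB0 : (0:ℝ) ≤ (activeBonds Λ η : ℝ) := Nat.cast_nonneg _
    unfold ham
    set n1 := (nPart Λ η 1 : ℝ)
    set n2 := (nPart Λ η 2 : ℝ)
    set B := (activeBonds Λ η : ℝ)
    rcases le_total n1 n2 with h | h
    · nlinarith [mul_le_mul_of_nonneg_left hB1 hU.le, mul_nonneg hU.le hn1]
    · nlinarith [mul_le_mul_of_nonneg_left hB2 hU.le, mul_nonneg hU.le hn2]
  refine ⟨hmain, fun η => ?_⟩
  have hzero : ham U Δ₁ Δ₂ Λ (fun _ => 0) = 0 := by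
    unfold ham nPart activeBonds bondCount
    simp
  rw [hzero]
  exact hmain η
end

section
/- Assume hypotheses (H1) and (H2). Then the stability level of □ equals Γ*, i.e. Φ(□, I_□) − H(□) = Γ*. -/
open scoped Classical

variable {X : Type*}

/-- `ω` (restricted to 0,…,L) is a path of allowed moves from `a` to `b`. -/
def IsPathW (rel : X → X → Prop) (a b : X) (L : ℕ) (ω : ℕ → X) : Prop :=
  ω 0 = a ∧ ω L = b ∧ ∀ i < L, rel (ω i) (ω (i + 1))

/-- The maximal energy along the path `ω = (ω 0, …, ω L)`. -/
noncomputable def pathMax (H : X → ℝ) (L : ℕ) (ω : ℕ → X) : ℝ :=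
  (Finset.range (L + 1)).sup' Finset.nonempty_range_add_one fun i => H (ω i)

/-- Communication height Φ(a,b) between two configurations. -/
noncomputable def commH (rel : X → X → Prop) (H : X → ℝ) (a b : X) : ℝ :=
  sInf { m : ℝ | ∃ L ω, IsPathW rel a b L ω ∧ m = pathMax H L ω }

/-- Communication height Φ(A,B) between two sets of configurations. -/
noncomputable def commHS (rel : X → X → Prop) (H : X → ℝ) (A B : Set X) : ℝ :=
  sInf { m : ℝ | ∃ a ∈ A, ∃ b ∈ B, m = commH rel H a b }

/-- The graph (X,∼) is connected. -/
def ConnGraph (rel : X → X → Prop) : Prop :=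
  ∀ a b : X, ∃ L ω, IsPathW rel a b L ω

namespace Stmt7Aux

variable (rel : X → X → Prop) (H : X → ℝ)

lemma le_pathMax {L : ℕ} {ω : ℕ → X} {i : ℕ} (h : i ≤ L) :
    H (ω i) ≤ pathMax H L ω := by
  exact Finset.le_sup' (fun i => H (ω i)) (Finset.mem_range.2 (Nat.lt_succ_of_le h))

lemma pathMax_mem_range (L : ℕ) (ω : ℕ → X) : pathMax H L ω ∈ Set.range H := by
  obtain ⟨i, -, hi⟩ := Finset.exists_mem_eq_sup'
    (Finset.nonempty_range_add_one (n := L)) (fun i => H (ω i))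
  exact ⟨ω i, hi.symm⟩

variable [Fintype X]

lemma pathSet_finite (a b : X) :
    {m : ℝ | ∃ L ω, IsPathW rel a b L ω ∧ m = pathMax H L ω}.Finite :=
  (Set.finite_range H).subset (by rintro m ⟨L, ω, -, rfl⟩; exact pathMax_mem_range H L ω)

lemma commH_mem (hconn : ConnGraph rel) (a b : X) :
    ∃ L ω, IsPathW rel a b L ω ∧ commH rel H a b = pathMax H L ω := by
  have : commH rel H a b ∈
      {m : ℝ | ∃ L ω, IsPathW rel a b L ω ∧ m = pathMax H L ω} := by
    apply Set.Nonempty.csInf_mem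
    · obtain ⟨L, ω, h⟩ := hconn a b; exact ⟨_, L, ω, h, rfl⟩
    · exact pathSet_finite rel H a b
  exact this

lemma commH_le {a b : X} {L : ℕ} {ω : ℕ → X} (h : IsPathW rel a b L ω) :
    commH rel H a b ≤ pathMax H L ω :=
  csInf_le (pathSet_finite rel H a b).bddBelow ⟨L, ω, h, rfl⟩

lemma le_commH_left (hconn : ConnGraph rel) (a b : X) : H a ≤ commH rel H a b := by
  obtain ⟨L, ω, ⟨h0, -, -⟩, he⟩ := commH_mem rel H hconn a b
  rw [he, ← h0]
  exact le_pathMax H (Nat.zero_le L)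

omit [Fintype X] in
/-- Concatenation of paths. -/
lemma concat {a b c : X} {L1 L2 : ℕ} {ω1 ω2 : ℕ → X}
    (h1 : IsPathW rel a b L1 ω1) (h2 : IsPathW rel b c L2 ω2) :
    ∃ ω, IsPathW rel a c (L1 + L2) ω ∧
      pathMax H (L1 + L2) ω ≤ max (pathMax H L1 ω1) (pathMax H L2 ω2) := by
  obtain ⟨h10, h1L, h1s⟩ := h1
  obtain ⟨h20, h2L, h2s⟩ := h2
  refine ⟨fun i => if i < L1 then ω1 i else ω2 (i - L1), ⟨?_, ?_, ?_⟩, ?_⟩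
  · by_cases h : 0 < L1
    · simp [h, h10]
    · have hL1 : L1 = 0 := by omega
      subst hL1
      have : ω2 0 = a := by rw [h20, ← h1L]; exact h10
      simpa using this
  · have : ¬ (L1 + L2 < L1) := by omega
    simp only [this, if_false]
    rw [Nat.add_sub_cancel_left, h2L]
  · intro i hi
    by_cases h : i < L1
    · by_cases h' : i + 1 < L1
      · simpa [h, h'] using h1s i h
      · have hi1 : i + 1 = L1 := by omega
        have : ω2 (i + 1 - L1) = ω1 (i + 1) := by
          rw [hi1, Nat.sub_self, h20, ← h1L]
        simp only [h, if_pos, h', if_neg, this]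
        exact h1s i h
    · have h' : ¬ (i + 1 < L1) := by omega
      simp only [h, h', if_neg]
      have : i + 1 - L1 = (i - L1) + 1 := by omega
      rw [this]
      exact h2s (i - L1) (by omega)
  · apply Finset.sup'_le
    intro i hi
    rw [Finset.mem_range] at hi
    by_cases h : i < L1
    · simp only [h, if_pos]
      exact le_trans (le_pathMax H (le_of_lt h)) (le_max_left _ _)
    · simp only [h, if_neg]
      exact le_trans (le_pathMax H (by omega : i - L1 ≤ L2)) (le_max_right _ _)

lemma commH_triangle (hconn : ConnGraph rel) (a b c : X) :
    commH rel H a c ≤ max (commH rel H a b) (commH rel H b c) := by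
  obtain ⟨L1, ω1, h1, e1⟩ := commH_mem rel H hconn a b
  obtain ⟨L2, ω2, h2, e2⟩ := commH_mem rel H hconn b c
  obtain ⟨ω, hω, hle⟩ := concat rel H h1 h2
  calc commH rel H a c ≤ pathMax H (L1 + L2) ω := commH_le rel H hω
    _ ≤ max (pathMax H L1 ω1) (pathMax H L2 ω2) := hle
    _ = max (commH rel H a b) (commH rel H b c) := by rw [e1, e2]

lemma commHS_finite (A B : Set X) :
    {m : ℝ | ∃ a ∈ A, ∃ b ∈ B, m = commH rel H a b}.Finite :=
  (Set.finite_range (fun p : X × X => commH rel H p.1 p.2)).subset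
    (by rintro m ⟨a, -, b, -, rfl⟩; exact ⟨(a, b), rfl⟩)

lemma commHS_mem {A B : Set X} (hA : A.Nonempty) (hB : B.Nonempty) :
    ∃ a ∈ A, ∃ b ∈ B, commHS rel H A B = commH rel H a b := by
  have : commHS rel H A B ∈ {m : ℝ | ∃ a ∈ A, ∃ b ∈ B, m = commH rel H a b} := by
    apply Set.Nonempty.csInf_mem
    · obtain ⟨a, ha⟩ := hA; obtain ⟨b, hb⟩ := hB
      exact ⟨_, a, ha, b, hb, rfl⟩
    · exact commHS_finite rel H A B
  exact this

lemma commHS_le {A B : Set X} {a b : X} (ha : a ∈ A) (hb : b ∈ B) :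
    commHS rel H A B ≤ commH rel H a b :=
  csInf_le (commHS_finite rel H A B).bddBelow ⟨a, ha, b, hb, rfl⟩

end Stmt7Aux

/-- under (H1)–(H2), the stability level of □ equals Γ*, i.e.
Φ(□, I_□) − H(□) = Γ* = Φ(□,⊞) − H(□). -/
theorem stmt_7 [Fintype X] (rel : X → X → Prop) (H : X → ℝ)
    (hsymm : Symmetric rel) (hconn : ConnGraph rel)
    (sq bx : X) (hne : sq ≠ bx) (Hsq : H sq = 0)
    -- (H1): X_stab = {⊞}
    (hH1 : {η : X | ∀ ξ, H η ≤ H ξ} = {bx})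
    -- (H2): ∃ V* < Γ* with V_η ≤ V* for all η ∉ {□,⊞}
    (hH2 : ∃ Vs : ℝ, Vs < commH rel H sq bx - H sq ∧
      ∀ η : X, η ≠ sq → η ≠ bx →
        ({ξ : X | H ξ < H η}).Nonempty ∧
        commHS rel H {η} {ξ : X | H ξ < H η} - H η ≤ Vs) :
    commHS rel H {sq} {ξ : X | H ξ < H sq} - H sq = commH rel H sq bx - H sq := by
  obtain ⟨Vs, hVs, hst⟩ := hH2
  -- bx is the unique global minimum
  have hbxmem : bx ∈ {η : X | ∀ ξ, H η ≤ H ξ} := by rw [hH1]; rfl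
  have hbxmin : ∀ ξ, H bx ≤ H ξ := hbxmem
  have hbxlt : ∀ η : X, η ≠ bx → H bx < H η := by
    intro η hη
    rcases lt_or_ge (H bx) (H η) with h | h
    · exact h
    · exfalso
      have : η ∈ {η : X | ∀ ξ, H η ≤ H ξ} := fun ξ => le_trans h (hbxmin ξ)
      rw [hH1] at this
      exact hη this
  have hbxsq : H bx < H sq := hbxlt sq hne
  have hVs' : Vs < commH rel H sq bx := by rw [Hsq] at hVs; linarith
  -- Key descent lemma
  have key : ∀ n : ℕ, ∀ η : X,
      (Finset.univ.filter fun ξ => H ξ < H η).card ≤ n →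
      H η < H sq → η ≠ bx → commH rel H η bx ≤ H η + Vs := by
    intro n
    induction n with
    | zero =>
      intro η hcard hηsq hηbx
      exfalso
      have : bx ∈ Finset.univ.filter fun ξ => H ξ < H η := by
        simp [hbxlt η hηbx]
      have := Finset.card_pos.2 ⟨bx, this⟩
      omega
    | succ n ih =>
      intro η hcard hηsq hηbx
      have hηsq' : η ≠ sq := fun h => by rw [h] at hηsq; exact lt_irrefl _ hηsq
      obtain ⟨-, hVη⟩ := hst η hηsq' hηbx
      obtain ⟨a, ha, ξ', hξ', heq⟩ := Stmt7Aux.commHS_mem rel H (A := {η})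
        (B := {ξ : X | H ξ < H η}) (Set.singleton_nonempty η) ⟨bx, hbxlt η hηbx⟩
      rw [Set.mem_singleton_iff] at ha
      rw [ha] at heq
      have hcomm : commH rel H η ξ' ≤ H η + Vs := by
        rw [← heq]; linarith
      have hξ'η : H ξ' < H η := hξ'
      by_cases hξbx : ξ' = bx
      · rw [← hξbx]; exact hcomm
      · have hsub : (Finset.univ.filter fun ξ => H ξ < H ξ') ⊂
            (Finset.univ.filter fun ξ => H ξ < H η) := by
          constructor
          · intro x hx
            simp only [Finset.mem_filter, Finset.mem_univ, true_and] at hx ⊢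
            exact lt_trans hx hξ'η
          · intro hsub'
            have : ξ' ∈ Finset.univ.filter fun ξ => H ξ < H η := by
              simp [hξ'η]
            have := hsub' this
            simp at this
        have hcard' : (Finset.univ.filter fun ξ => H ξ < H ξ').card ≤ n := by
          have := Finset.card_lt_card hsub
          omega
        have hrec := ih ξ' hcard' (lt_trans hξ'η hηsq) hξbx
        have htri := Stmt7Aux.commH_triangle rel H hconn η ξ' bx
        have : max (commH rel H η ξ') (commH rel H ξ' bx) ≤ H η + Vs :=
          max_le hcomm (by linarith)
        linarith [le_trans htri this]
  -- Conclusion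
  have hbxI : bx ∈ {ξ : X | H ξ < H sq} := hbxsq
  have hle : commHS rel H {sq} {ξ : X | H ξ < H sq} ≤ commH rel H sq bx :=
    Stmt7Aux.commHS_le rel H rfl hbxI
  obtain ⟨a, ha, ξ, hξ, heq⟩ := Stmt7Aux.commHS_mem rel H
    (Set.singleton_nonempty sq) ⟨bx, hbxI⟩
  rw [Set.mem_singleton_iff] at ha
  rw [ha] at heq
  have hξsq : H ξ < H sq := hξ
  have hge : commH rel H sq bx ≤ commHS rel H {sq} {ξ : X | H ξ < H sq} := by
    by_cases hξbx : ξ = bx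
    · rw [heq, hξbx]
    · have h1 : commH rel H ξ bx ≤ H ξ + Vs :=
        key (Finset.univ.filter fun ζ => H ζ < H ξ).card ξ le_rfl hξsq hξbx
      have h2 : commH rel H ξ bx < commH rel H sq bx := by
        have : H ξ < 0 := by rw [← Hsq]; exact hξsq
        linarith
      have htri := Stmt7Aux.commH_triangle rel H hconn sq ξ bx
      rw [heq]
      rcases max_cases (commH rel H sq ξ) (commH rel H ξ bx) with ⟨he, -⟩ | ⟨he, -⟩
      · rw [he] at htri; exact htri
      · rw [he] at htri; linarith
  linarith [le_antisymm hle hge]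
end

section
/- Assume hypothesis (H2). Then for every η ∈ X ∖ {□,⊞} one has Φ(η, {□,⊞}) − H(η) ≤ V*. -/
open scoped Classical

variable {X : Type*}

section helpers
variable [Fintype X] (rel : X → X → Prop) (H : X → ℝ)

lemma pathSet_subset (a b : X) :
    {m : ℝ | ∃ L ω, IsPathW rel a b L ω ∧ m = pathMax H L ω} ⊆ Set.range H := by
  rintro m ⟨L, ω, -, rfl⟩
  obtain ⟨i, -, hi⟩ := Finset.exists_mem_eq_sup' (Finset.nonempty_range_add_one (n := L))
    (fun i => H (ω i))
  exact ⟨ω i, hi.symm⟩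

lemma pathSet_finite (a b : X) :
    Set.Finite {m : ℝ | ∃ L ω, IsPathW rel a b L ω ∧ m = pathMax H L ω} :=
  (Set.finite_range H).subset (pathSet_subset rel H a b)

lemma commH_le_pathMax {a b : X} {L : ℕ} {ω : ℕ → X} (hp : IsPathW rel a b L ω) :
    commH rel H a b ≤ pathMax H L ω :=
  csInf_le (pathSet_finite rel H a b).bddBelow ⟨L, ω, hp, rfl⟩

lemma commH_attained (hconn : ConnGraph rel) (a b : X) :
    ∃ L ω, IsPathW rel a b L ω ∧ commH rel H a b = pathMax H L ω := by
  obtain ⟨L, ω, hp⟩ := hconn a b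
  have hne : {m : ℝ | ∃ L ω, IsPathW rel a b L ω ∧ m = pathMax H L ω}.Nonempty :=
    ⟨pathMax H L ω, ⟨L, ω, hp, rfl⟩⟩
  exact hne.csInf_mem (pathSet_finite rel H a b)

lemma commH_mem_range (hconn : ConnGraph rel) (a b : X) :
    commH rel H a b ∈ Set.range H := by
  obtain ⟨L, ω, hp, he⟩ := commH_attained rel H hconn a b
  exact pathSet_subset rel H a b ⟨L, ω, hp, he⟩

lemma commH_triangle (hconn : ConnGraph rel) (a c b : X) :
    commH rel H a b ≤ max (commH rel H a c) (commH rel H c b) := by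
  obtain ⟨L1, ω1, hp1, he1⟩ := commH_attained rel H hconn a c
  obtain ⟨L2, ω2, hp2, he2⟩ := commH_attained rel H hconn c b
  set ω : ℕ → X := fun i => if i ≤ L1 then ω1 i else ω2 (i - L1) with hω
  have hpath : IsPathW rel a b (L1 + L2) ω := by
    refine ⟨by simp [hω, hp1.1], ?_, ?_⟩
    · by_cases hL2 : L2 = 0
      · have : c = b := by rw [← hp2.1, ← hp2.2.1, hL2]
        simp [hω, hL2, hp1.2.1, this]
      · have h1 : ¬ (L1 + L2 ≤ L1) := by omega
        have h2 : L1 + L2 - L1 = L2 := by omega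
        simp [hω, h1, h2, hp2.2.1]
    · intro i hi
      by_cases h1 : i + 1 ≤ L1
      · have hi1 : i ≤ L1 := by omega
        simpa [hω, h1, hi1] using hp1.2.2 i (by omega)
      · by_cases h2 : i ≤ L1
        · have hiL : i = L1 := by omega
          have hL2 : 0 < L2 := by omega
          have h3 : i + 1 - L1 = 1 := by omega
          have hc : ω1 L1 = ω2 0 := by rw [hp1.2.1, hp2.1]
          simpa [hω, h1, h2, hiL, h3, hc] using hp2.2.2 0 hL2
        · have h3 : i + 1 - L1 = (i - L1) + 1 := by omega
          simpa [hω, h1, h2, h3] using hp2.2.2 (i - L1) (by omega)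
  have hmax : pathMax H (L1 + L2) ω ≤ max (pathMax H L1 ω1) (pathMax H L2 ω2) := by
    apply Finset.sup'_le
    intro i hi
    rw [Finset.mem_range] at hi
    by_cases h : i ≤ L1
    · refine le_trans ?_ (le_max_left _ _)
      simp only [hω, h, if_true]
      exact Finset.le_sup' (fun j => H (ω1 j)) (Finset.mem_range.mpr (by omega))
    · refine le_trans ?_ (le_max_right _ _)
      simp only [hω, h, if_false]
      exact Finset.le_sup' (fun j => H (ω2 j)) (Finset.mem_range.mpr (by omega))
  calc commH rel H a b ≤ pathMax H (L1 + L2) ω := commH_le_pathMax rel H hpath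
    _ ≤ _ := hmax
    _ = max (commH rel H a c) (commH rel H c b) := by rw [he1, he2]

lemma commHS_set_finite (η : X) (S : Set X) (hconn : ConnGraph rel) :
    Set.Finite {m : ℝ | ∃ a ∈ ({η} : Set X), ∃ b ∈ S, m = commH rel H a b} := by
  apply (Set.finite_range H).subset
  rintro m ⟨a, -, b, -, rfl⟩
  exact commH_mem_range rel H hconn a b

lemma commHS_le (hconn : ConnGraph rel) (η : X) {S : Set X} {b : X} (hb : b ∈ S) :
    commHS rel H {η} S ≤ commH rel H η b :=
  csInf_le (commHS_set_finite rel H η S hconn).bddBelow ⟨η, rfl, b, hb, rfl⟩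

lemma commHS_attained (hconn : ConnGraph rel) (η : X) {S : Set X} (hS : S.Nonempty) :
    ∃ b ∈ S, commHS rel H {η} S = commH rel H η b := by
  obtain ⟨b0, hb0⟩ := hS
  have hne : {m : ℝ | ∃ a ∈ ({η} : Set X), ∃ b ∈ S, m = commH rel H a b}.Nonempty :=
    ⟨commH rel H η b0, ⟨η, rfl, b0, hb0, rfl⟩⟩
  have hmem : commHS rel H {η} S ∈
      {m : ℝ | ∃ a ∈ ({η} : Set X), ∃ b ∈ S, m = commH rel H a b} :=
    hne.csInf_mem (commHS_set_finite rel H η S hconn)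
  obtain ⟨a, ha, b, hb, he⟩ := hmem
  rw [Set.mem_singleton_iff] at ha
  exact ⟨b, hb, by rw [he, ha]⟩

end helpers

/-- under (H2), every η ∈ X ∖ {□,⊞} satisfies
Φ(η, {□,⊞}) − H(η) ≤ V*. -/
theorem stmt_8 [Fintype X] (rel : X → X → Prop) (H : X → ℝ)
    (hsymm : Symmetric rel) (hconn : ConnGraph rel)
    (sq bx : X) (hne : sq ≠ bx) (Hsq : H sq = 0)
    (Vs : ℝ) (hVs : Vs < commH rel H sq bx - H sq)
    -- (H2): V_η ≤ V* for all η ∉ {□,⊞}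
    (hH2 : ∀ η : X, η ≠ sq → η ≠ bx →
      ({ξ : X | H ξ < H η}).Nonempty ∧
      commHS rel H {η} {ξ : X | H ξ < H η} - H η ≤ Vs) :
    ∀ η : X, η ≠ sq → η ≠ bx →
      commHS rel H {η} {sq, bx} - H η ≤ Vs := by
  suffices h : ∀ n : ℕ, ∀ η : X, η ≠ sq → η ≠ bx →
      ({ξ : X | H ξ < H η}).ncard ≤ n → commHS rel H {η} {sq, bx} ≤ H η + Vs by
    intro η hs hb
    have := h (({ξ : X | H ξ < H η}).ncard) η hs hb le_rfl
    linarith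
  intro n
  induction n with
  | zero =>
    intro η hs hb hc
    obtain ⟨hIne, -⟩ := hH2 η hs hb
    have hpos : 0 < ({ξ : X | H ξ < H η}).ncard :=
      (Set.ncard_pos (Set.toFinite _)).mpr hIne
    omega
  | succ n ih =>
    intro η hs hb hc
    obtain ⟨hIne, hV⟩ := hH2 η hs hb
    obtain ⟨ξ, hξ, heq⟩ := commHS_attained rel H hconn η hIne
    have hξlt : H ξ < H η := hξ
    have hcomm : commH rel H η ξ ≤ H η + Vs := by rw [← heq]; linarith
    by_cases hξsq : ξ = sq
    · have h3 : commHS rel H {η} {sq, bx} ≤ commH rel H η sq :=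
        commHS_le rel H hconn η (by simp : sq ∈ ({sq, bx} : Set X))
      rw [hξsq] at hcomm; linarith
    by_cases hξbx : ξ = bx
    · have h3 : commHS rel H {η} {sq, bx} ≤ commH rel H η bx :=
        commHS_le rel H hconn η (by simp : bx ∈ ({sq, bx} : Set X))
      rw [hξbx] at hcomm; linarith
    have hss : {ζ : X | H ζ < H ξ} ⊂ {ζ : X | H ζ < H η} := by
      constructor
      · intro ζ hζ; exact lt_trans hζ hξlt
      · intro hsub; have : H ξ < H ξ := hsub hξlt; exact absurd this (lt_irrefl _)
    have hlt : ({ζ : X | H ζ < H ξ}).ncard < ({ζ : X | H ζ < H η}).ncard :=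
      Set.ncard_lt_ncard hss (Set.toFinite _)
    have hIH := ih ξ hξsq hξbx (by omega)
    obtain ⟨b, hbmem, hbe⟩ := commHS_attained rel H hconn ξ
      (show ({sq, bx} : Set X).Nonempty from ⟨sq, by simp⟩)
    have h1 : commH rel H ξ b ≤ H ξ + Vs := by rw [← hbe]; exact hIH
    have h2 : commH rel H η b ≤ max (commH rel H η ξ) (commH rel H ξ b) :=
      commH_triangle rel H hconn η ξ b
    have h3 : commHS rel H {η} {sq, bx} ≤ commH rel H η b :=
      commHS_le rel H hconn η hbmem
    have h4 : commH rel H ξ b ≤ H η + Vs := by linarith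
    exact h3.trans (h2.trans (max_le hcomm h4))
end

section
/- Assume hypotheses (H1) and (H2). Then {□,⊞} is a metastable set in the sense of Bovier–Eckhoff–Gayrard–Klein: lim_{β→∞} [max_{η ∈ X∖{□,⊞}} μ_β(η)/CAP_β({η}, {□,⊞})] / [min_{η ∈ {□,⊞}} μ_β(η)/CAP_β({η}, {□,⊞}∖{η})] = 0. -/
open scoped Classical

variable {X : Type*}

/-- Partition function Z_β. -/
noncomputable def Zb [Fintype X] (H : X → ℝ) (β : ℝ) : ℝ :=
  ∑ ξ : X, Real.exp (-β * H ξ)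

/-- Gibbs measure μ_β. -/
noncomputable def gibbs [Fintype X] (H : X → ℝ) (β : ℝ) (η : X) : ℝ :=
  Real.exp (-β * H η) / Zb H β

/-- Metropolis transition rates c_β. -/
noncomputable def crate (rel : X → X → Prop) (H : X → ℝ) (β : ℝ) (η η' : X) : ℝ :=
  if rel η η' then Real.exp (-β * max (H η' - H η) 0) else 0

/-- Dirichlet form E_β(h). -/
noncomputable def dirE [Fintype X] (rel : X → X → Prop) (H : X → ℝ) (β : ℝ)
    (h : X → ℝ) : ℝ :=
  (1 / 2) * ∑ η : X, ∑ η' : X, gibbs H β η * crate rel H β η η' * (h η - h η') ^ 2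

/-- Capacity CAP_β(A,B). -/
noncomputable def capB [Fintype X] (rel : X → X → Prop) (H : X → ℝ) (β : ℝ)
    (A B : Set X) : ℝ :=
  sInf { e : ℝ | ∃ h : X → ℝ, (∀ η, 0 ≤ h η ∧ h η ≤ 1) ∧
    (∀ η ∈ A, h η = 1) ∧ (∀ η ∈ B, h η = 0) ∧ e = dirE rel H β h }

open Filter

namespace Stmt15

variable {X : Type*}

lemma le_pathMax (H : X → ℝ) {L : ℕ} (ω : ℕ → X) {i : ℕ} (hi : i ≤ L) :
    H (ω i) ≤ pathMax H L ω :=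
  Finset.le_sup' (f := fun i => H (ω i)) (Finset.mem_range.2 (Nat.lt_succ_of_le hi))

lemma pathMax_le {H : X → ℝ} {L : ℕ} {ω : ℕ → X} {M : ℝ}
    (h : ∀ i ≤ L, H (ω i) ≤ M) : pathMax H L ω ≤ M :=
  Finset.sup'_le _ _ fun i hi => h i (Nat.lt_succ_iff.1 (Finset.mem_range.1 hi))

lemma exists_pathMax_eq (H : X → ℝ) (L : ℕ) (ω : ℕ → X) :
    ∃ i ≤ L, pathMax H L ω = H (ω i) := by
  obtain ⟨i, hi, h⟩ := Finset.exists_mem_eq_sup' (Finset.nonempty_range_add_one (n := L))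
    fun i => H (ω i)
  exact ⟨i, Nat.lt_succ_iff.1 (Finset.mem_range.1 hi), h⟩

lemma commSet_nonempty {rel : X → X → Prop} (H : X → ℝ) (hconn : ConnGraph rel) (a b : X) :
    { m : ℝ | ∃ L ω, IsPathW rel a b L ω ∧ m = pathMax H L ω }.Nonempty := by
  obtain ⟨L, ω, h⟩ := hconn a b
  exact ⟨_, L, ω, h, rfl⟩

lemma commSet_bddBelow (rel : X → X → Prop) (H : X → ℝ) (a b : X) :
    BddBelow { m : ℝ | ∃ L ω, IsPathW rel a b L ω ∧ m = pathMax H L ω } := by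
  refine ⟨H a, ?_⟩
  rintro m ⟨L, ω, hp, rfl⟩
  have := le_pathMax H ω (Nat.zero_le L)
  rwa [hp.1] at this

lemma commH_le_pathMax {rel : X → X → Prop} (H : X → ℝ) {a b : X} {L : ℕ} {ω : ℕ → X}
    (hp : IsPathW rel a b L ω) : commH rel H a b ≤ pathMax H L ω :=
  csInf_le (commSet_bddBelow rel H a b) ⟨L, ω, hp, rfl⟩

lemma left_le_commH {rel : X → X → Prop} (H : X → ℝ) (hconn : ConnGraph rel) (a b : X) :
    H a ≤ commH rel H a b := by
  refine le_csInf (commSet_nonempty H hconn a b) ?_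
  rintro m ⟨L, ω, hp, rfl⟩
  have := le_pathMax H ω (Nat.zero_le L)
  rwa [hp.1] at this

lemma exists_optPath [Finite X] {rel : X → X → Prop} (H : X → ℝ) (hconn : ConnGraph rel)
    (a b : X) : ∃ L ω, IsPathW rel a b L ω ∧ pathMax H L ω = commH rel H a b := by
  have hsub : { m : ℝ | ∃ L ω, IsPathW rel a b L ω ∧ m = pathMax H L ω } ⊆ Set.range H := by
    rintro m ⟨L, ω, hp, rfl⟩
    obtain ⟨i, _, hi⟩ := exists_pathMax_eq H L ω
    exact ⟨ω i, hi.symm⟩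
  have hfin := (Set.finite_range H).subset hsub
  have hmem := (commSet_nonempty H hconn a b).csInf_mem hfin
  obtain ⟨L, ω, hp, hm⟩ := hmem
  exact ⟨L, ω, hp, hm.symm⟩

lemma commH_self_le (rel : X → X → Prop) (H : X → ℝ) (a : X) : commH rel H a a ≤ H a := by
  have hp : IsPathW rel a a 0 (fun _ => a) := ⟨rfl, rfl, fun i hi => absurd hi (Nat.not_lt_zero i)⟩
  exact (commH_le_pathMax H hp).trans (pathMax_le fun i _ => le_rfl)

lemma commH_le_max_of_rel {rel : X → X → Prop} (H : X → ℝ) {a b : X} (hr : rel a b) :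
    commH rel H a b ≤ max (H a) (H b) := by
  have hp : IsPathW rel a b 1 (fun i => if i = 0 then a else b) := by
    refine ⟨rfl, rfl, ?_⟩
    intro i hi
    interval_cases i
    simpa using hr
  refine (commH_le_pathMax H hp).trans (pathMax_le ?_)
  intro i hi
  interval_cases i
  · exact le_max_left _ _
  · exact le_max_right _ _

lemma isPathW_concat {rel : X → X → Prop} {a b c : X} {L₁ L₂ : ℕ} {ω₁ ω₂ : ℕ → X}
    (h₁ : IsPathW rel a b L₁ ω₁) (h₂ : IsPathW rel b c L₂ ω₂) :
    IsPathW rel a c (L₁ + L₂) (fun i => if i < L₁ then ω₁ i else ω₂ (i - L₁)) := by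
  obtain ⟨ha, hb, hs⟩ := h₁
  obtain ⟨hb', hc, hs'⟩ := h₂
  refine ⟨?_, ?_, ?_⟩
  · rcases Nat.eq_zero_or_pos L₁ with h0 | h0
    · subst h0
      show (if 0 < 0 then ω₁ 0 else ω₂ (0 - 0)) = a
      rw [if_neg (lt_irrefl 0)]
      show ω₂ 0 = a
      rw [hb', ← hb, ha]
    · simp [h0, ha]
  · have : ¬ (L₁ + L₂ < L₁) := by omega
    simp [this, hc]
  · intro i hi
    rcases lt_trichotomy (i + 1) L₁ with h | h | h
    · have hi1 : i < L₁ := by omega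
      simp only [if_pos hi1, if_pos h]
      exact hs i hi1
    · have hi1 : i < L₁ := by omega
      have h2 : ¬ (i + 1 < L₁) := by omega
      show rel (if i < L₁ then ω₁ i else ω₂ (i - L₁))
        (if i + 1 < L₁ then ω₁ (i + 1) else ω₂ (i + 1 - L₁))
      rw [if_pos hi1, if_neg h2]
      have h3 : i + 1 - L₁ = 0 := by omega
      rw [h3, hb', ← hb, ← h]
      exact hs i hi1
    · have hi1 : ¬ (i < L₁) := by omega
      have hi2 : ¬ (i + 1 < L₁) := by omega
      simp only [if_neg hi1, if_neg hi2]
      have harith : i + 1 - L₁ = (i - L₁) + 1 := by omega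
      rw [harith]
      exact hs' (i - L₁) (by omega)

lemma commH_trans [Finite X] {rel : X → X → Prop} (H : X → ℝ) (hconn : ConnGraph rel)
    (a b c : X) : commH rel H a c ≤ max (commH rel H a b) (commH rel H b c) := by
  obtain ⟨L₁, ω₁, hp₁, hm₁⟩ := exists_optPath H hconn a b
  obtain ⟨L₂, ω₂, hp₂, hm₂⟩ := exists_optPath H hconn b c
  have hp := isPathW_concat hp₁ hp₂
  refine (commH_le_pathMax H hp).trans ?_
  refine (pathMax_le ?_)
  intro i hi
  by_cases h : i < L₁
  · simp only [if_pos h]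
    calc H (ω₁ i) ≤ pathMax H L₁ ω₁ := le_pathMax H ω₁ h.le
      _ = commH rel H a b := hm₁
      _ ≤ max (commH rel H a b) (commH rel H b c) := le_max_left _ _
  · simp only [if_neg h]
    have h2 : i - L₁ ≤ L₂ := by omega
    calc H (ω₂ (i - L₁)) ≤ pathMax H L₂ ω₂ := le_pathMax H ω₂ h2
      _ = commH rel H b c := hm₂
      _ ≤ max (commH rel H a b) (commH rel H b c) := le_max_right _ _

lemma commH_symm [Finite X] {rel : X → X → Prop} (H : X → ℝ) (hsymm : Symmetric rel)
    (hconn : ConnGraph rel) (a b : X) : commH rel H a b = commH rel H b a := by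
  have key : ∀ x y : X, commH rel H y x ≤ commH rel H x y := by
    intro x y
    obtain ⟨L, ω, hp, hm⟩ := exists_optPath H hconn x y
    obtain ⟨hx, hy, hs⟩ := hp
    have hp' : IsPathW rel y x L (fun i => ω (L - i)) := by
      refine ⟨by simp [hy], by simp [hx], ?_⟩
      intro i hi
      have h1 : L - i = (L - (i + 1)) + 1 := by omega
      have h2 := hs (L - (i + 1)) (by omega)
      show rel (ω (L - i)) (ω (L - (i + 1)))
      rw [h1]
      exact hsymm h2
    refine (commH_le_pathMax H hp').trans ?_
    rw [← hm]
    exact pathMax_le fun i hi => le_pathMax H ω (by omega)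
  exact le_antisymm (key b a) (key a b)

end Stmt15

namespace Stmt15

variable {X : Type*}

lemma exists_commHS [Finite X] (rel : X → X → Prop) (H : X → ℝ) (η : X) {I : Set X}
    (hI : I.Nonempty) : ∃ b ∈ I, commH rel H η b = commHS rel H {η} I := by
  have hset : { m : ℝ | ∃ a ∈ ({η} : Set X), ∃ b ∈ I, m = commH rel H a b }
      = (fun b => commH rel H η b) '' I := by
    ext m
    constructor
    · rintro ⟨a, ha, b, hb, rfl⟩
      rcases ha with rfl
      exact ⟨b, hb, rfl⟩
    · rintro ⟨b, hb, rfl⟩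
      exact ⟨η, rfl, b, hb, rfl⟩
  have hne : ((fun b => commH rel H η b) '' I).Nonempty := hI.image _
  have hfin : ((fun b => commH rel H η b) '' I).Finite := (Set.toFinite I).image _
  have hmem := hne.csInf_mem hfin
  obtain ⟨b, hb, hbe⟩ := hmem
  refine ⟨b, hb, ?_⟩
  rw [commHS, hset]
  exact hbe

lemma reach [Finite X] {rel : X → X → Prop} {H : X → ℝ} (hconn : ConnGraph rel)
    {sq bx : X} {Vs : ℝ}
    (hH2 : ∀ η : X, η ≠ sq → η ≠ bx → ({ξ : X | H ξ < H η}).Nonempty ∧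
        commHS rel H {η} {ξ : X | H ξ < H η} - H η ≤ Vs) :
    ∀ η : X, η ≠ sq → η ≠ bx →
      ∃ t : X, (t = sq ∨ t = bx) ∧ commH rel H η t ≤ H η + Vs := by
  have := Fintype.ofFinite X
  suffices h : ∀ n : ℕ, ∀ η : X, (Finset.univ.filter fun ξ => H ξ < H η).card ≤ n →
      η ≠ sq → η ≠ bx → ∃ t : X, (t = sq ∨ t = bx) ∧ commH rel H η t ≤ H η + Vs by
    exact fun η => h _ η le_rfl
  intro n
  induction n with
  | zero =>
    intro η hcard h1 h2
    obtain ⟨hne, _⟩ := hH2 η h1 h2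
    obtain ⟨ξ, hξ⟩ := hne
    have : ξ ∈ Finset.univ.filter fun ξ => H ξ < H η := by
      simp only [Finset.mem_filter, Finset.mem_univ, true_and]; exact hξ
    have := Finset.card_pos.2 ⟨ξ, this⟩
    omega
  | succ n ih =>
    intro η hcard h1 h2
    obtain ⟨hne, hV⟩ := hH2 η h1 h2
    obtain ⟨b, hbI, hb⟩ := exists_commHS rel H η hne
    have hbH : H b < H η := hbI
    have hcomm : commH rel H η b ≤ H η + Vs := by rw [hb]; linarith [hV]
    by_cases hbs : b = sq
    · exact ⟨sq, Or.inl rfl, by rwa [hbs] at hcomm⟩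
    by_cases hbb : b = bx
    · exact ⟨bx, Or.inr rfl, by rwa [hbb] at hcomm⟩
    have hcard' : (Finset.univ.filter fun ξ => H ξ < H b).card ≤ n := by
      have hss : (Finset.univ.filter fun ξ => H ξ < H b)
          ⊂ (Finset.univ.filter fun ξ => H ξ < H η) := by
        refine Finset.ssubset_iff_of_subset ?_ |>.2 ?_
        · intro ξ hξ
          simp only [Finset.mem_filter, Finset.mem_univ, true_and] at *
          exact hξ.trans hbH
        · refine ⟨b, ?_, ?_⟩
          · simp only [Finset.mem_filter, Finset.mem_univ, true_and]; exact hbH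
          · simp only [Finset.mem_filter, Finset.mem_univ, true_and, not_lt]
            exact le_rfl
      have := Finset.card_lt_card hss
      omega
    obtain ⟨t, ht, hct⟩ := ih b hcard' hbs hbb
    refine ⟨t, ht, ?_⟩
    have h3 := commH_trans H hconn η b t
    have hbt : commH rel H b t ≤ H η + Vs := le_trans hct (by linarith)
    exact le_trans h3 (max_le hcomm hbt)

lemma Zb_pos [Fintype X] [Nonempty X] (H : X → ℝ) (β : ℝ) : 0 < Zb H β :=
  Finset.sum_pos (fun _ _ => Real.exp_pos _) Finset.univ_nonempty

lemma Zb_nonneg [Fintype X] (H : X → ℝ) (β : ℝ) : 0 ≤ Zb H β :=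
  Finset.sum_nonneg fun _ _ => (Real.exp_pos _).le

lemma gibbs_nonneg [Fintype X] (H : X → ℝ) (β : ℝ) (η : X) : 0 ≤ gibbs H β η :=
  div_nonneg (Real.exp_pos _).le (Zb_nonneg H β)

lemma crate_nonneg (rel : X → X → Prop) (H : X → ℝ) (β : ℝ) (η η' : X) :
    0 ≤ crate rel H β η η' := by
  unfold crate; split_ifs
  · exact (Real.exp_pos _).le
  · exact le_refl 0

lemma dirE_nonneg [Fintype X] (rel : X → X → Prop) (H : X → ℝ) (β : ℝ) (h : X → ℝ) :
    0 ≤ dirE rel H β h := by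
  refine mul_nonneg (by norm_num) ?_
  refine Finset.sum_nonneg fun η _ => Finset.sum_nonneg fun η' _ => ?_
  exact mul_nonneg (mul_nonneg (gibbs_nonneg H β η) (crate_nonneg rel H β η η')) (sq_nonneg _)

lemma term_eq [Fintype X] {rel : X → X → Prop} (H : X → ℝ) (β : ℝ) {η η' : X}
    (hr : rel η η') : gibbs H β η * crate rel H β η η'
      = Real.exp (-β * max (H η) (H η')) / Zb H β := by
  unfold gibbs crate
  rw [if_pos hr, div_mul_eq_mul_div, ← Real.exp_add]
  congr 2
  rcases le_total (H η) (H η') with h | h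
  · rw [max_eq_right h, max_eq_left (by linarith : (0:ℝ) ≤ H η' - H η)]
    ring
  · rw [max_eq_left h, max_eq_right (by linarith : H η' - H η ≤ 0)]
    ring

end Stmt15

namespace Stmt15

variable {X : Type*}

lemma capB_bddBelow [Fintype X] (rel : X → X → Prop) (H : X → ℝ) (β : ℝ) (A B : Set X) :
    BddBelow { e : ℝ | ∃ h : X → ℝ, (∀ η, 0 ≤ h η ∧ h η ≤ 1) ∧
      (∀ η ∈ A, h η = 1) ∧ (∀ η ∈ B, h η = 0) ∧ e = dirE rel H β h } := by
  refine ⟨0, ?_⟩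
  rintro e ⟨h, _, _, _, rfl⟩
  exact dirE_nonneg rel H β h

lemma capB_nonneg [Fintype X] (rel : X → X → Prop) (H : X → ℝ) (β : ℝ) (A B : Set X) :
    0 ≤ capB rel H β A B := by
  apply Real.sInf_nonneg
  rintro e ⟨h, _, _, _, rfl⟩
  exact dirE_nonneg rel H β h

lemma exp_div_mono [Fintype X] (H : X → ℝ) {β : ℝ} (hβ : 0 ≤ β) {Γ M : ℝ} (hM : Γ ≤ M)
    (hZ : 0 < Zb H β) :
    Real.exp (-β * M) / Zb H β ≤ Real.exp (-β * Γ) / Zb H β := by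
  apply (div_le_div_iff_of_pos_right hZ).2
  apply Real.exp_le_exp.2
  exact mul_le_mul_of_nonpos_left hM (neg_nonpos.2 hβ)

lemma capB_upper [Fintype X] {rel : X → X → Prop} (hsymm : Symmetric rel) (H : X → ℝ)
    (hconn : ConnGraph rel) {β : ℝ} (hβ : 0 ≤ β) {a b : X} (hab : a ≠ b) :
    capB rel H β {a} {b} ≤
      (Fintype.card X : ℝ) ^ 2 * Real.exp (-β * commH rel H a b) / Zb H β := by
  set Γ := commH rel H a b with hΓ
  set h : X → ℝ := fun ξ => if commH rel H a ξ < Γ ∨ ξ = a then 1 else 0 with hh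
  have : Nonempty X := ⟨a⟩
  have hZ : 0 < Zb H β := Zb_pos H β
  have cut : ∀ η η' : X, rel η η' → (commH rel H a η < Γ ∨ η = a) →
      ¬(commH rel H a η' < Γ ∨ η' = a) → Γ ≤ max (H η) (H η') := by
    intro η η' hr hK hK'
    push_neg at hK'
    obtain ⟨hK1, _⟩ := hK'
    have step : commH rel H a η' ≤ max (commH rel H a η) (max (H η) (H η')) :=
      (commH_trans H hconn a η η').trans
        (max_le_max le_rfl (commH_le_max_of_rel H hr))
    rcases hK with hlt | rfl
    · rcases le_max_iff.1 (hK1.trans step) with h' | h'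
      · linarith
      · exact h'
    · have hself : commH rel H η η ≤ H η := commH_self_le rel H η
      rcases le_max_iff.1 (hK1.trans step) with h' | h'
      · exact le_trans (h'.trans hself) (le_max_left _ _)
      · exact h'
  have key : ∀ η η' : X, gibbs H β η * crate rel H β η η' * (h η - h η') ^ 2 ≤
      Real.exp (-β * Γ) / Zb H β := by
    intro η η'
    have hpos : (0:ℝ) ≤ Real.exp (-β * Γ) / Zb H β :=
      div_nonneg (Real.exp_pos _).le hZ.le
    by_cases hr : rel η η'
    · by_cases hK : commH rel H a η < Γ ∨ η = a
        <;> by_cases hK' : commH rel H a η' < Γ ∨ η' = a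
      · simp only [hh, if_pos hK, if_pos hK', sub_self]
        simpa using hpos
      · have hcut := cut η η' hr hK hK'
        have hd : h η - h η' = 1 := by simp [hh, if_pos hK, if_neg hK']
        rw [term_eq H β hr, hd, one_pow, mul_one]
        exact exp_div_mono H hβ hcut hZ
      · have hcut := cut η' η (hsymm hr) hK' hK
        have hd : h η - h η' = -1 := by simp [hh, if_neg hK, if_pos hK']
        rw [term_eq H β hr, hd]
        have h1 : ((-1:ℝ)) ^ 2 = 1 := by norm_num
        rw [h1, mul_one]
        rw [max_comm] at hcut
        exact exp_div_mono H hβ hcut hZ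
      · simp only [hh, if_neg hK, if_neg hK', sub_self]
        simpa using hpos
    · simp only [crate, if_neg hr, mul_zero, zero_mul]
      exact hpos
  have hmem : dirE rel H β h ∈ { e : ℝ | ∃ h : X → ℝ, (∀ η, 0 ≤ h η ∧ h η ≤ 1) ∧
      (∀ η ∈ ({a} : Set X), h η = 1) ∧ (∀ η ∈ ({b} : Set X), h η = 0) ∧
      e = dirE rel H β h } := by
    refine ⟨h, ?_, ?_, ?_, rfl⟩
    · intro η
      constructor <;> simp only [hh] <;> split_ifs <;> norm_num
    · intro η hη
      rcases hη with rfl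
      simp [hh]
    · intro η hη
      rcases hη with rfl
      have hcond : ¬ (commH rel H a η < Γ ∨ η = a) := by
        push_neg
        exact ⟨le_of_eq hΓ, fun hba => hab hba.symm⟩
      simp only [hh]
      rw [if_neg hcond]
  have h1 : capB rel H β {a} {b} ≤ dirE rel H β h :=
    csInf_le (capB_bddBelow rel H β {a} {b}) hmem
  refine h1.trans ?_
  have h2 : dirE rel H β h ≤ (1/2) * ((Fintype.card X : ℝ) ^ 2 * (Real.exp (-β * Γ) / Zb H β)) := by
    unfold dirE
    apply mul_le_mul_of_nonneg_left ?_ (by norm_num)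
    calc ∑ η : X, ∑ η' : X, gibbs H β η * crate rel H β η η' * (h η - h η') ^ 2
        ≤ ∑ _η : X, ∑ _η' : X, Real.exp (-β * Γ) / Zb H β := by
          refine Finset.sum_le_sum fun η _ => Finset.sum_le_sum fun η' _ => key η η'
      _ = (Fintype.card X : ℝ) ^ 2 * (Real.exp (-β * Γ) / Zb H β) := by
          simp [Finset.sum_const, Finset.card_univ, nsmul_eq_mul]
          ring
  refine h2.trans ?_
  rw [mul_div_assoc]
  have hnn : (0:ℝ) ≤ (Fintype.card X : ℝ) ^ 2 * (Real.exp (-β * Γ) / Zb H β) :=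
    mul_nonneg (by positivity) (div_nonneg (Real.exp_pos _).le hZ.le)
  linarith

end Stmt15

namespace Stmt15

variable {X : Type*}

lemma capB_lower [Fintype X] {rel : X → X → Prop} {H : X → ℝ} {β : ℝ} (hβ : 0 ≤ β)
    {a : X} {B : Set X} (haB : a ∉ B) {t : X} (htB : t ∈ B) {L : ℕ} {ω : ℕ → X}
    (hp : IsPathW rel a t L ω) (hL : 1 ≤ L) {M : ℝ} (hM : pathMax H L ω ≤ M) :
    Real.exp (-β * M) / ((2 * (L:ℝ) ^ 2) * Zb H β) ≤ capB rel H β {a} B := by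
  have : Nonempty X := ⟨a⟩
  have hZ : 0 < Zb H β := Zb_pos H β
  have hLpos : (0:ℝ) < (L:ℝ) := by exact_mod_cast hL
  apply le_csInf
  · refine ⟨dirE rel H β (fun ξ => if ξ = a then 1 else 0), fun ξ => if ξ = a then 1 else 0,
      ?_, ?_, ?_, rfl⟩
    · intro η
      dsimp only
      constructor <;> split_ifs <;> norm_num
    · intro η hη; rcases hη with rfl; simp
    · intro η hη
      have : η ≠ a := fun h => haB (h ▸ hη)
      simp [this]
  rintro e ⟨h, hbnd, hA, hB, rfl⟩
  have ha1 : h a = 1 := hA a rfl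
  have ht0 : h t = 0 := hB t htB
  have htel : ∑ i ∈ Finset.range L, (h (ω i) - h (ω (i + 1))) = 1 := by
    rw [Finset.sum_range_sub' (fun i => h (ω i)) L]
    rw [hp.1, hp.2.1, ha1, ht0]
    ring
  have hex : ∃ i, i < L ∧ (1:ℝ) / L ≤ h (ω i) - h (ω (i + 1)) := by
    by_contra hcon
    push_neg at hcon
    have hlt : ∑ i ∈ Finset.range L, (h (ω i) - h (ω (i + 1)))
        < ∑ _i ∈ Finset.range L, (1:ℝ) / L := by
      refine Finset.sum_lt_sum_of_nonempty ?_ ?_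
      · exact Finset.nonempty_range_iff.2 (by omega)
      · intro i hi
        exact hcon i (Finset.mem_range.1 hi)
    rw [htel, Finset.sum_const, Finset.card_range, nsmul_eq_mul] at hlt
    rw [mul_one_div, div_self hLpos.ne'] at hlt
    exact lt_irrefl _ hlt
  obtain ⟨i, hiL, hΔ⟩ := hex
  have hrel := hp.2.2 i hiL
  set F : X → X → ℝ := fun η η' => gibbs H β η * crate rel H β η η' * (h η - h η') ^ 2 with hF
  have hFnn : ∀ η η' : X, 0 ≤ F η η' := fun η η' =>
    mul_nonneg (mul_nonneg (gibbs_nonneg H β η) (crate_nonneg rel H β η η')) (sq_nonneg _)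
  have hsingle : F (ω i) (ω (i + 1)) ≤ ∑ η : X, ∑ η' : X, F η η' := by
    have h1 : F (ω i) (ω (i + 1)) ≤ ∑ η' : X, F (ω i) η' :=
      Finset.single_le_sum (fun η' _ => hFnn (ω i) η') (Finset.mem_univ _)
    have h2 : ∑ η' : X, F (ω i) η' ≤ ∑ η : X, ∑ η' : X, F η η' :=
      Finset.single_le_sum (fun η _ => Finset.sum_nonneg fun η' _ => hFnn η η')
        (Finset.mem_univ _)
    exact h1.trans h2
  have hterm : Real.exp (-β * M) / ((2 * (L:ℝ) ^ 2) * Zb H β) ≤ (1/2) * F (ω i) (ω (i + 1)) := by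
    have hgc : F (ω i) (ω (i + 1)) = Real.exp (-β * max (H (ω i)) (H (ω (i + 1)))) / Zb H β
        * (h (ω i) - h (ω (i + 1))) ^ 2 := by
      show gibbs H β (ω i) * crate rel H β (ω i) (ω (i + 1)) * (h (ω i) - h (ω (i + 1))) ^ 2
        = Real.exp (-β * max (H (ω i)) (H (ω (i + 1)))) / Zb H β
          * (h (ω i) - h (ω (i + 1))) ^ 2
      rw [term_eq H β hrel]
    have hmax : max (H (ω i)) (H (ω (i + 1))) ≤ M := by
      refine max_le ?_ ?_
      · exact (le_pathMax H ω (by omega)).trans hM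
      · exact (le_pathMax H ω (by omega)).trans hM
    have hexp : Real.exp (-β * M) ≤ Real.exp (-β * max (H (ω i)) (H (ω (i + 1)))) :=
      Real.exp_le_exp.2 (mul_le_mul_of_nonpos_left hmax (neg_nonpos.2 hβ))
    have hΔsq : (1 / (L:ℝ)) ^ 2 ≤ (h (ω i) - h (ω (i + 1))) ^ 2 := by
      have h1L : 0 < 1 / (L:ℝ) := by positivity
      apply sq_le_sq'
      · linarith
      · exact hΔ
    calc Real.exp (-β * M) / ((2 * (L:ℝ) ^ 2) * Zb H β)
        = (1/2) * (Real.exp (-β * M) / Zb H β * (1 / (L:ℝ)) ^ 2) := by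
          field_simp
      _ ≤ (1/2) * (Real.exp (-β * max (H (ω i)) (H (ω (i + 1)))) / Zb H β
            * (h (ω i) - h (ω (i + 1))) ^ 2) := by
          apply mul_le_mul_of_nonneg_left ?_ (by norm_num)
          apply mul_le_mul
          · exact (div_le_div_iff_of_pos_right hZ).mpr hexp
          · exact hΔsq
          · positivity
          · positivity
      _ = (1/2) * F (ω i) (ω (i + 1)) := by rw [hgc]
  refine hterm.trans ?_
  unfold dirE
  apply mul_le_mul_of_nonneg_left hsingle (by norm_num)

end Stmt15


/-- under (H1)–(H2), {□,⊞} is a metastable set in the sense of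
Bovier–Eckhoff–Gayrard–Klein: the ratio of the maximal μ_β(η)/CAP_β(η,{□,⊞})
over η ∉ {□,⊞} to the minimal μ_β(η)/CAP_β(η,{□,⊞}∖{η}) over η ∈ {□,⊞}
tends to 0 as β → ∞. -/
theorem stmt_15 [Fintype X] (rel : X → X → Prop) (H : X → ℝ)
    (hsymm : Symmetric rel) (hconn : ConnGraph rel)
    (sq bx : X) (hne : sq ≠ bx) (Hsq : H sq = 0)
    -- (H1): X_stab = {⊞}
    (hH1 : {η : X | ∀ ξ, H η ≤ H ξ} = {bx})
    -- (H2): ∃ V* < Γ* with V_η ≤ V* for all η ∉ {□,⊞}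
    (hH2 : ∃ Vs : ℝ, Vs < commH rel H sq bx - H sq ∧
      ∀ η : X, η ≠ sq → η ≠ bx →
        ({ξ : X | H ξ < H η}).Nonempty ∧
        commHS rel H {η} {ξ : X | H ξ < H η} - H η ≤ Vs) :
    Tendsto (fun β : ℝ =>
      sSup { r : ℝ | ∃ η : X, η ≠ sq ∧ η ≠ bx ∧
          r = gibbs H β η / capB rel H β {η} {sq, bx} } /
      min (gibbs H β sq / capB rel H β {sq} {bx})
          (gibbs H β bx / capB rel H β {bx} {sq}))
      atTop (nhds 0) := by
    classical
  obtain ⟨Vs, hVs, hH2'⟩ := hH2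
  haveI : Nonempty X := ⟨sq⟩
  rw [Hsq, sub_zero] at hVs
  set Γ : ℝ := commH rel H sq bx with hΓdef
  -- per-state numerator bound
  have hnum : ∀ η : X, ∃ C : ℝ, 0 < C ∧ ∀ β : ℝ, 0 ≤ β → η ≠ sq → η ≠ bx →
      gibbs H β η / capB rel H β {η} {sq, bx} ≤ C * Real.exp (β * Vs) := by
    intro η
    by_cases h1 : η = sq
    · exact ⟨1, one_pos, fun β _ hη _ => absurd h1 hη⟩
    by_cases h2 : η = bx
    · exact ⟨1, one_pos, fun β _ _ hη => absurd h2 hη⟩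
    obtain ⟨t, ht, hct⟩ := Stmt15.reach hconn hH2' η h1 h2
    obtain ⟨L, ω, hp, hpm⟩ := Stmt15.exists_optPath H hconn η t
    have hL : 1 ≤ L := by
      rcases Nat.eq_zero_or_pos L with h0 | h0
      · exfalso
        have hη : η = t := by rw [← hp.1, ← hp.2.1, h0]
        rcases ht with rfl | rfl
        · exact h1 hη
        · exact h2 hη
      · exact h0
    refine ⟨2 * (L:ℝ) ^ 2, by positivity, fun β hβ _ _ => ?_⟩
    have hZ : 0 < Zb H β := Stmt15.Zb_pos H β
    have htB : t ∈ ({sq, bx} : Set X) := by rcases ht with rfl | rfl <;> simp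
    have haB : η ∉ ({sq, bx} : Set X) := by simp [h1, h2]
    have hM : pathMax H L ω ≤ H η + Vs := by rw [hpm]; exact hct
    have hlow := Stmt15.capB_lower hβ haB htB hp hL hM
    have hlp : 0 < Real.exp (-β * (H η + Vs)) / ((2 * (L:ℝ) ^ 2) * Zb H β) := by positivity
    have hcap : 0 < capB rel H β {η} {sq, bx} := lt_of_lt_of_le hlp hlow
    rw [div_le_iff₀ hcap]
    have hmul : 2 * (L:ℝ) ^ 2 * Real.exp (β * Vs) *
        (Real.exp (-β * (H η + Vs)) / ((2 * (L:ℝ) ^ 2) * Zb H β))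
        = Real.exp (-β * H η) / Zb H β := by
      have hL2 : (2 * (L:ℝ) ^ 2) ≠ 0 := by positivity
      have he : Real.exp (β * Vs) * Real.exp (-β * (H η + Vs)) = Real.exp (-β * H η) := by
        rw [← Real.exp_add]
        congr 1
        ring
      rw [← he]
      field_simp
    calc gibbs H β η = Real.exp (-β * H η) / Zb H β := rfl
      _ = 2 * (L:ℝ) ^ 2 * Real.exp (β * Vs) *
            (Real.exp (-β * (H η + Vs)) / ((2 * (L:ℝ) ^ 2) * Zb H β)) := hmul.symm
      _ ≤ 2 * (L:ℝ) ^ 2 * Real.exp (β * Vs) * capB rel H β {η} {sq, bx} :=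
            mul_le_mul_of_nonneg_left hlow (by positivity)
  choose C hC using hnum
  set C0 : ℝ := Finset.univ.sup' Finset.univ_nonempty C with hC0def
  have hC0pos : 0 < C0 := lt_of_lt_of_le (hC sq).1 (Finset.le_sup' C (Finset.mem_univ sq))
  have hn2 : (0:ℝ) < (Fintype.card X : ℝ) ^ 2 := by
    have : 0 < Fintype.card X := Fintype.card_pos
    positivity
  -- numerator bounds
  have hNum_le : ∀ β : ℝ, 0 ≤ β →
      sSup { r : ℝ | ∃ η : X, η ≠ sq ∧ η ≠ bx ∧
          r = gibbs H β η / capB rel H β {η} {sq, bx} } ≤ C0 * Real.exp (β * Vs) := by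
    intro β hβ
    apply Real.sSup_le
    · rintro r ⟨η, hη1, hη2, rfl⟩
      refine le_trans ((hC η).2 β hβ hη1 hη2) ?_
      exact mul_le_mul_of_nonneg_right (Finset.le_sup' C (Finset.mem_univ η))
        (Real.exp_pos _).le
    · positivity
  have hNum_nonneg : ∀ β : ℝ,
      0 ≤ sSup { r : ℝ | ∃ η : X, η ≠ sq ∧ η ≠ bx ∧
          r = gibbs H β η / capB rel H β {η} {sq, bx} } := by
    intro β
    apply Real.sSup_nonneg
    rintro r ⟨η, hη1, hη2, rfl⟩
    exact div_nonneg (Stmt15.gibbs_nonneg H β η) (Stmt15.capB_nonneg rel H β _ _)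
  -- denominator bound
  have hden : ∀ β : ℝ, 0 ≤ β →
      Real.exp (β * Γ) / (Fintype.card X : ℝ) ^ 2 ≤
        min (gibbs H β sq / capB rel H β {sq} {bx})
          (gibbs H β bx / capB rel H β {bx} {sq}) := by
    intro β hβ
    have hZ : 0 < Zb H β := Stmt15.Zb_pos H β
    obtain ⟨L₁, ω₁, hp₁, hpm₁⟩ := Stmt15.exists_optPath H hconn sq bx
    obtain ⟨L₂, ω₂, hp₂, hpm₂⟩ := Stmt15.exists_optPath H hconn bx sq
    have hL₁ : 1 ≤ L₁ := by
      rcases Nat.eq_zero_or_pos L₁ with h0 | h0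
      · exact absurd (by rw [← hp₁.1, ← hp₁.2.1, h0]) hne
      · exact h0
    have hL₂ : 1 ≤ L₂ := by
      rcases Nat.eq_zero_or_pos L₂ with h0 | h0
      · exact absurd (by rw [← hp₂.1, ← hp₂.2.1, h0]) hne.symm
      · exact h0
    have hcap₁pos : 0 < capB rel H β {sq} {bx} := by
      refine lt_of_lt_of_le ?_ (Stmt15.capB_lower (B := {bx}) hβ
        (fun h => hne h) rfl hp₁ hL₁ le_rfl)
      positivity
    have hcap₂pos : 0 < capB rel H β {bx} {sq} := by
      refine lt_of_lt_of_le ?_ (Stmt15.capB_lower (B := {sq}) hβ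
        (fun h => hne.symm h) rfl hp₂ hL₂ le_rfl)
      positivity
    have hub₁ := Stmt15.capB_upper hsymm H hconn hβ hne
    have hub₂ := Stmt15.capB_upper hsymm H hconn hβ hne.symm
    rw [Stmt15.commH_symm H hsymm hconn bx sq] at hub₂
    have hgs : gibbs H β sq = 1 / Zb H β := by
      unfold gibbs; rw [Hsq, mul_zero, Real.exp_zero]
    have hHbx : H bx ≤ 0 := by
      have hbxmem : bx ∈ {η : X | ∀ ξ, H η ≤ H ξ} := by rw [hH1]; rfl
      have := hbxmem sq
      rwa [Hsq] at this
    have hgb : 1 / Zb H β ≤ gibbs H β bx := by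
      unfold gibbs
      refine (div_le_div_iff_of_pos_right hZ).2 ?_
      have hnn : (0:ℝ) ≤ -β * H bx := by nlinarith
      calc (1:ℝ) = Real.exp 0 := Real.exp_zero.symm
        _ ≤ Real.exp (-β * H bx) := Real.exp_le_exp.2 hnn
    have hkey : Real.exp (β * Γ) / (Fintype.card X : ℝ) ^ 2
        = (1 / Zb H β) / ((Fintype.card X : ℝ) ^ 2 * Real.exp (-β * Γ) / Zb H β) := by
      have hee : Real.exp (-β * Γ) = (Real.exp (β * Γ))⁻¹ := by
        rw [← Real.exp_neg]
        congr 1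
        ring
      rw [hee]
      field_simp
    refine le_min ?_ ?_
    · rw [hgs, hkey]
      exact div_le_div₀ (by positivity) le_rfl hcap₁pos hub₁
    · rw [hkey]
      exact div_le_div₀ (Stmt15.gibbs_nonneg H β bx) hgb hcap₂pos hub₂
  -- conclusion by squeezing
  have hdpos : ∀ β : ℝ, 0 ≤ β → 0 < Real.exp (β * Γ) / (Fintype.card X : ℝ) ^ 2 := by
    intro β hβ; positivity
  have hbound : ∀ β : ℝ, 0 ≤ β →
      sSup { r : ℝ | ∃ η : X, η ≠ sq ∧ η ≠ bx ∧
          r = gibbs H β η / capB rel H β {η} {sq, bx} } /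
        min (gibbs H β sq / capB rel H β {sq} {bx})
          (gibbs H β bx / capB rel H β {bx} {sq})
        ≤ (C0 * (Fintype.card X : ℝ) ^ 2) * Real.exp (β * (Vs - Γ)) := by
    intro β hβ
    have h1 : sSup { r : ℝ | ∃ η : X, η ≠ sq ∧ η ≠ bx ∧
          r = gibbs H β η / capB rel H β {η} {sq, bx} } /
        min (gibbs H β sq / capB rel H β {sq} {bx})
          (gibbs H β bx / capB rel H β {bx} {sq})
        ≤ (C0 * Real.exp (β * Vs)) / (Real.exp (β * Γ) / (Fintype.card X : ℝ) ^ 2) :=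
      div_le_div₀ (by positivity) (hNum_le β hβ) (hdpos β hβ) (hden β hβ)
    refine h1.trans (le_of_eq ?_)
    have he2 : Real.exp (β * Vs) = Real.exp (β * (Vs - Γ)) * Real.exp (β * Γ) := by
      rw [← Real.exp_add]
      congr 1
      ring
    rw [he2, div_div_eq_mul_div]
    field_simp
  have hnonneg : ∀ β : ℝ, 0 ≤ β →
      0 ≤ sSup { r : ℝ | ∃ η : X, η ≠ sq ∧ η ≠ bx ∧
          r = gibbs H β η / capB rel H β {η} {sq, bx} } /
        min (gibbs H β sq / capB rel H β {sq} {bx})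
          (gibbs H β bx / capB rel H β {bx} {sq}) := by
    intro β hβ
    exact div_nonneg (hNum_nonneg β) (le_of_lt (lt_of_lt_of_le (hdpos β hβ) (hden β hβ)))
  have hg : Tendsto (fun β : ℝ => (C0 * (Fintype.card X : ℝ) ^ 2) * Real.exp (β * (Vs - Γ)))
      atTop (nhds 0) := by
    have h1 : Tendsto (fun β : ℝ => β * (Vs - Γ)) atTop atBot :=
      Tendsto.atTop_mul_const_of_neg (by linarith) tendsto_id
    have h2 := Real.tendsto_exp_atBot.comp h1
    have h3 := h2.const_mul (C0 * (Fintype.card X : ℝ) ^ 2)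
    simpa using h3
  refine squeeze_zero' ?_ ?_ hg
  · filter_upwards [eventually_ge_atTop (0:ℝ)] with β hβ using hnonneg β hβ
  · filter_upwards [eventually_ge_atTop (0:ℝ)] with β hβ using hbound β hβ
end

section
/- Assume hypotheses (H1) and (H2), and assume Γ* > 0. Then there exist C < ∞ and δ > 0 such that for every β ∈ (0,∞) and every function h* attaining the minimum in the variational problem defining CAP_β({□},{⊞}) (the equilibrium potential of the pair □,⊞): min_{η ∈ X_□} h*(η) ≥ 1 − C e^{−δβ} and max_{η ∈ X_⊞} h*(η) ≤ C e^{−δβ}. -/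
open scoped Classical

variable {X : Type*}

/-- `a` and `b` are connected by a path staying inside `S`. -/
def connIn (rel : X → X → Prop) (S : Set X) (a b : X) : Prop :=
  ∃ L ω, IsPathW rel a b L ω ∧ ∀ i ≤ L, ω i ∈ S

/-- Γ* = Φ(□,⊞) − H(□). -/
noncomputable def gammaStar (rel : X → X → Prop) (H : X → ℝ) (a b : X) : ℝ :=
  commH rel H a b - H a

/-- X** = {η : H(η) < Γ*}. -/
noncomputable def Xss (rel : X → X → Prop) (H : X → ℝ) (a b : X) : Set X :=
  {η : X | H η < gammaStar rel H a b}

/-- The connected component of X** containing `root`. -/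
noncomputable def compOf (rel : X → X → Prop) (H : X → ℝ) (a b root : X) : Set X :=
  {η : X | connIn rel (Xss rel H a b) root η}


/-! ### Auxiliary lemmas for the proof of `stmt_16` -/

private lemma abs_le_of_sq_le_sq16 {a b : ℝ} (hb : 0 ≤ b) (h : a ^ 2 ≤ b ^ 2) : |a| ≤ b := by
  have := Real.sqrt_le_sqrt h
  rwa [Real.sqrt_sq_eq_abs, Real.sqrt_sq hb] at this

private lemma pathMax_lt_of16 {H : X → ℝ} {L : ℕ} {ω : ℕ → X} {c : ℝ}
    (h : ∀ i ≤ L, H (ω i) < c) : pathMax H L ω < c := by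
  refine (Finset.sup'_lt_iff _).2 fun i hi => ?_
  exact h i (Nat.lt_succ_iff.mp (Finset.mem_range.mp hi))

private lemma commH_le_pathMax16 [Fintype X] {rel : X → X → Prop} (H : X → ℝ) {a b : X}
    {L : ℕ} {ω : ℕ → X} (hp : IsPathW rel a b L ω) :
    commH rel H a b ≤ pathMax H L ω := by
  haveI : Nonempty X := ⟨a⟩
  refine csInf_le ⟨Finset.univ.inf' Finset.univ_nonempty H, ?_⟩ ⟨L, ω, hp, rfl⟩
  rintro m ⟨L', ω', _, rfl⟩
  calc Finset.univ.inf' Finset.univ_nonempty H ≤ H (ω' 0) :=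
        Finset.inf'_le _ (Finset.mem_univ _)
    _ ≤ pathMax H L' ω' :=
        Finset.le_sup' (fun i => H (ω' i)) (Finset.mem_range.mpr (Nat.succ_pos _))

private lemma comp_boundary16 {rel : X → X → Prop} {H : X → ℝ} {a b root η η' : X}
    (hη : η ∈ compOf rel H a b root) (hrel : rel η η')
    (hη' : η' ∉ compOf rel H a b root) : gammaStar rel H a b ≤ H η' := by
  by_contra hc
  push_neg at hc
  obtain ⟨L, ω, hp, hS⟩ := hη
  refine hη' ⟨L + 1, fun i => if i ≤ L then ω i else η', ⟨?_, ?_, ?_⟩, ?_⟩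
  · show (if 0 ≤ L then ω 0 else η') = root
    rw [if_pos (Nat.zero_le L)]; exact hp.1
  · show (if L + 1 ≤ L then ω (L + 1) else η') = η'
    rw [if_neg (by omega)]
  · intro i hi
    show rel (if i ≤ L then ω i else η') (if i + 1 ≤ L then ω (i + 1) else η')
    rcases Nat.lt_or_ge i L with h1 | h1
    · rw [if_pos (Nat.le_of_lt h1), if_pos (Nat.succ_le_of_lt h1)]
      exact hp.2.2 i h1
    · have hiL : i = L := by omega
      subst hiL
      rw [if_pos (le_refl i), if_neg (show ¬ (i + 1 ≤ i) by omega), hp.2.1]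
      exact hrel
  · intro i hi
    show (if i ≤ L then ω i else η') ∈ Xss rel H a b
    rcases le_or_gt i L with h1 | h1
    · rw [if_pos h1]; exact hS i h1
    · rw [if_neg (Nat.not_le_of_lt h1)]; exact hc

private lemma Zb_pos16 [Fintype X] [Nonempty X] (H : X → ℝ) (β : ℝ) : 0 < Zb H β :=
  Finset.sum_pos (fun _ _ => Real.exp_pos _) Finset.univ_nonempty

private lemma term_nonneg16 [Fintype X] [Nonempty X] (rel : X → X → Prop) (H : X → ℝ) (β : ℝ)
    (h : X → ℝ) (a b : X) :
    0 ≤ gibbs H β a * crate rel H β a b * (h a - h b) ^ 2 := by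
  have hZ := Zb_pos16 (X := X) H β
  refine mul_nonneg (mul_nonneg ?_ ?_) (sq_nonneg _)
  · exact div_nonneg (Real.exp_pos _).le hZ.le
  · unfold crate; split
    · exact (Real.exp_pos _).le
    · exact le_refl _
  
private lemma dirE_nonneg16 [Fintype X] [Nonempty X] (rel : X → X → Prop) (H : X → ℝ) (β : ℝ)
    (h : X → ℝ) : 0 ≤ dirE rel H β h := by
  refine mul_nonneg (by norm_num) ?_
  exact Finset.sum_nonneg fun η _ => Finset.sum_nonneg fun η' _ => term_nonneg16 rel H β h η η'

private lemma edge_weight16 [Fintype X] {rel : X → X → Prop} (H : X → ℝ) (β : ℝ) {η η' : X}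
    (hrel : rel η η') :
    gibbs H β η * crate rel H β η η' = Real.exp (-β * max (H η) (H η')) / Zb H β := by
  unfold gibbs crate
  rw [if_pos hrel, div_mul_eq_mul_div, ← Real.exp_add]
  congr 2
  rcases le_total (H η) (H η') with hle | hle
  · rw [max_eq_right hle, max_eq_left (by linarith : (0:ℝ) ≤ H η' - H η)]; ring
  · rw [max_eq_left hle, max_eq_right (by linarith : H η' - H η ≤ (0:ℝ))]; ring

private lemma term_le_dirE16 [Fintype X] [Nonempty X] (rel : X → X → Prop) (H : X → ℝ) (β : ℝ)
    (h : X → ℝ) (a b : X) :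
    (1 / 2) * (gibbs H β a * crate rel H β a b * (h a - h b) ^ 2) ≤ dirE rel H β h := by
  unfold dirE
  refine mul_le_mul_of_nonneg_left ?_ (by norm_num)
  calc gibbs H β a * crate rel H β a b * (h a - h b) ^ 2
      ≤ ∑ η' : X, gibbs H β a * crate rel H β a η' * (h a - h η') ^ 2 :=
        Finset.single_le_sum (fun i _ => term_nonneg16 rel H β h a i) (Finset.mem_univ b)
    _ ≤ ∑ η : X, ∑ η' : X, gibbs H β η * crate rel H β η η' * (h η - h η') ^ 2 :=
        Finset.single_le_sum
          (fun i _ => Finset.sum_nonneg fun j _ => term_nonneg16 rel H β h i j)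
          (Finset.mem_univ a)

/-- under (H1)–(H2) and Γ* > 0, there exist C < ∞ and δ > 0 such
that every minimizer h* of the variational problem for CAP_β({□},{⊞}) (the
equilibrium potential) satisfies min_{X_□} h* ≥ 1 − Ce^{−δβ} and
max_{X_⊞} h* ≤ Ce^{−δβ}, for every β > 0. -/
theorem stmt_16 [Fintype X] (rel : X → X → Prop) (H : X → ℝ)
    (hsymm : Symmetric rel) (hconn : ConnGraph rel)
    (sq bx : X) (hne : sq ≠ bx) (Hsq : H sq = 0)
    -- (H1): X_stab = {⊞}
    (hH1 : {η : X | ∀ ξ, H η ≤ H ξ} = {bx})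
    -- (H2): ∃ V* < Γ* with V_η ≤ V* for all η ∉ {□,⊞}
    (hH2 : ∃ Vs : ℝ, Vs < gammaStar rel H sq bx ∧
      ∀ η : X, η ≠ sq → η ≠ bx →
        ({ξ : X | H ξ < H η}).Nonempty ∧
        commHS rel H {η} {ξ : X | H ξ < H η} - H η ≤ Vs)
    (hΓ : 0 < gammaStar rel H sq bx) :
    ∃ C : ℝ, ∃ δ : ℝ, 0 < δ ∧ ∀ β : ℝ, 0 < β →
      ∀ hstar : X → ℝ,
        (∀ η, 0 ≤ hstar η ∧ hstar η ≤ 1) → hstar sq = 1 → hstar bx = 0 →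
        dirE rel H β hstar = capB rel H β {sq} {bx} →
        (∀ η ∈ compOf rel H sq bx sq, 1 - C * Real.exp (-δ * β) ≤ hstar η) ∧
        (∀ η ∈ compOf rel H sq bx bx, hstar η ≤ C * Real.exp (-δ * β)) := by
    classical
  haveI : Nonempty X := ⟨sq⟩
  set Γ := gammaStar rel H sq bx with hΓdef
  set S := Xss rel H sq bx with hSdef
  set A := compOf rel H sq bx sq with hAdef
  set n : ℝ := (Fintype.card X : ℝ) with hn
  have hn0 : 0 < n := by
    rw [hn]; exact_mod_cast Fintype.card_pos
  -- the uniform energy bound M0 < Γ on X**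
  set T := Finset.univ.filter (fun ξ : X => H ξ < Γ) with hT
  have hTne : T.Nonempty := by
    refine ⟨sq, ?_⟩
    simp only [hT, Finset.mem_filter, Finset.mem_univ, true_and, Hsq]
    exact hΓ
  set M0 := T.sup' hTne H with hM0
  have hM0lt : M0 < Γ := (Finset.sup'_lt_iff hTne).2 fun ξ hξ => (Finset.mem_filter.mp hξ).2
  have hM0le : ∀ ξ : X, H ξ < Γ → H ξ ≤ M0 := fun ξ h =>
    Finset.le_sup' H (Finset.mem_filter.mpr ⟨Finset.mem_univ _, h⟩)
  have hSmemH : ∀ ξ : X, ξ ∈ S → H ξ < Γ := by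
    intro ξ hξ
    rw [hSdef] at hξ
    exact hξ
  -- a uniform length bound for connecting paths inside X**
  obtain ⟨Lm, hLm⟩ : ∃ Lm : ℕ, ∀ r η : X, connIn rel S r η →
      ∃ L ω, L ≤ Lm ∧ IsPathW rel r η L ω ∧ ∀ i ≤ L, ω i ∈ S := by
    set F : X × X → ℕ := fun p => if h : connIn rel S p.1 p.2 then h.choose else 0 with hF
    refine ⟨Finset.univ.sup F, fun r η h => ?_⟩
    obtain ⟨ω, hω⟩ := h.choose_spec
    refine ⟨h.choose, ω, ?_, hω.1, hω.2⟩
    have hFe : F (r, η) = h.choose := dif_pos h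
    rw [← hFe]
    exact Finset.le_sup (Finset.mem_univ _)
  refine ⟨n * Lm, (Γ - M0) / 2, by linarith, ?_⟩
  intro β hβ hstar hbound hsq1 hbx0 hcap
  set δ : ℝ := (Γ - M0) / 2 with hδdef
  have hZ : 0 < Zb H β := Zb_pos16 (X := X) H β
  -- the indicator test function of the component of sq
  set g : X → ℝ := fun ξ => if ξ ∈ A then 1 else 0 with hg
  have hsqA : sq ∈ A := by
    refine ⟨0, fun _ => sq, ⟨rfl, rfl, fun i hi => absurd hi (Nat.not_lt_zero i)⟩,
      fun i _ => ?_⟩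
    show H sq < Γ
    rw [Hsq]; exact hΓ
  have hΓcomm : Γ = commH rel H sq bx := by
    rw [hΓdef]; unfold gammaStar; rw [Hsq]; ring
  have hbxA : bx ∉ A := by
    rintro ⟨L, ω, hp, hSm⟩
    have h1 := commH_le_pathMax16 H hp
    have h2 : pathMax H L ω < Γ := pathMax_lt_of16 fun i hi => hSmemH _ (hSm i hi)
    rw [← hΓcomm] at h1
    linarith
  -- bound on each term of the Dirichlet form of g
  have hterm : ∀ η η' : X, gibbs H β η * crate rel H β η η' * (g η - g η') ^ 2
      ≤ Real.exp (-β * Γ) / Zb H β := by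
    intro η η'
    have hb : (0:ℝ) ≤ Real.exp (-β * Γ) / Zb H β := by positivity
    by_cases hrel : rel η η'
    · by_cases hη : η ∈ A <;> by_cases hη' : η' ∈ A
      · simp only [hg, if_pos hη, if_pos hη', sub_self]
        simpa using hb
      · have hmax : Γ ≤ max (H η) (H η') :=
          le_trans (comp_boundary16 hη hrel hη') (le_max_right _ _)
        rw [edge_weight16 H β hrel]
        simp only [hg, if_pos hη, if_neg hη']
        rw [show ((1:ℝ) - 0) ^ 2 = 1 by ring, mul_one]
        have hee : Real.exp (-β * max (H η) (H η')) ≤ Real.exp (-β * Γ) :=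
          Real.exp_le_exp.2 (by nlinarith)
        gcongr
      · have hmax : Γ ≤ max (H η) (H η') :=
          le_trans (comp_boundary16 hη' (hsymm hrel) hη) (le_max_left _ _)
        rw [edge_weight16 H β hrel]
        simp only [hg, if_neg hη, if_pos hη']
        rw [show ((0:ℝ) - 1) ^ 2 = 1 by ring, mul_one]
        have hee : Real.exp (-β * max (H η) (H η')) ≤ Real.exp (-β * Γ) :=
          Real.exp_le_exp.2 (by nlinarith)
        gcongr
      · simp only [hg, if_neg hη, if_neg hη', sub_self]
        simpa using hb
    · simp only [crate, if_neg hrel, mul_zero, zero_mul]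
      exact hb
  -- capacity upper bound
  have hEg : dirE rel H β g ≤ n ^ 2 * (Real.exp (-β * Γ) / Zb H β) / 2 := by
    unfold dirE
    have h1 : ∑ η : X, ∑ η' : X, gibbs H β η * crate rel H β η η' * (g η - g η') ^ 2
        ≤ n * (n * (Real.exp (-β * Γ) / Zb H β)) := by
      calc ∑ η : X, ∑ η' : X, gibbs H β η * crate rel H β η η' * (g η - g η') ^ 2
          ≤ ∑ _η : X, ∑ _η' : X, (Real.exp (-β * Γ) / Zb H β) :=
            Finset.sum_le_sum fun η _ => Finset.sum_le_sum fun η' _ => hterm η η'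
        _ = n * (n * (Real.exp (-β * Γ) / Zb H β)) := by
            simp [Finset.sum_const, Finset.card_univ, nsmul_eq_mul, hn]
    nlinarith [h1]
  have hcapUB : dirE rel H β hstar ≤ n ^ 2 * (Real.exp (-β * Γ) / Zb H β) / 2 := by
    rw [hcap]
    refine le_trans (csInf_le ?_ ?_) hEg
    · refine ⟨0, ?_⟩
      rintro e ⟨h', _, _, _, rfl⟩
      exact dirE_nonneg16 rel H β h'
    · refine ⟨g, fun η => ?_, fun η hη => ?_, fun η hη => ?_, rfl⟩
      · constructor <;> · simp only [hg]; split <;> norm_num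
      · rw [Set.mem_singleton_iff] at hη; subst hη
        simp only [hg, if_pos hsqA]
      · rw [Set.mem_singleton_iff] at hη; subst hη
        simp only [hg, if_neg hbxA]
  have hE0 : 0 ≤ dirE rel H β hstar := dirE_nonneg16 rel H β hstar
  -- the key estimate along connecting paths
  have key : ∀ r η : X, connIn rel S r η →
      |hstar r - hstar η| ≤ n * Lm * Real.exp (-δ * β) := by
    intro r η hcon
    obtain ⟨L, ω, hLle, hp, hSm⟩ := hLm r η hcon
    have hedge : ∀ i < L, |hstar (ω (i + 1)) - hstar (ω i)| ≤ n * Real.exp (-δ * β) := by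
      intro i hi
      have hrel := hp.2.2 i hi
      have h2 := term_le_dirE16 rel H β hstar (ω i) (ω (i + 1))
      rw [edge_weight16 H β hrel] at h2
      set m : ℝ := max (H (ω i)) (H (ω (i + 1))) with hm
      have hmM0 : m ≤ M0 := max_le (hM0le _ (hSmemH _ (hSm i hi.le)))
        (hM0le _ (hSmemH _ (hSm (i + 1) hi)))
      set d : ℝ := hstar (ω i) - hstar (ω (i + 1)) with hd
      -- from h2 and hcapUB : exp(-βm)/Z * d² ≤ n² exp(-βΓ)/Z
      have h3 : Real.exp (-β * m) / Zb H β * d ^ 2 ≤ n ^ 2 * (Real.exp (-β * Γ) / Zb H β) := by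
        linarith
      have h4 : Real.exp (-β * m) * d ^ 2 ≤ n ^ 2 * Real.exp (-β * Γ) := by
        rw [div_mul_eq_mul_div, ← mul_div_assoc] at h3
        have h3' := mul_le_mul_of_nonneg_right h3 hZ.le
        rwa [div_mul_cancel₀ _ (ne_of_gt hZ), div_mul_cancel₀ _ (ne_of_gt hZ)] at h3'
      have h5 : Real.exp (-β * M0) * d ^ 2 ≤ n ^ 2 * Real.exp (-β * Γ) := by
        refine le_trans (mul_le_mul_of_nonneg_right ?_ (sq_nonneg d)) h4
        exact Real.exp_le_exp.2 (by nlinarith)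
      have h6 : d ^ 2 ≤ Real.exp (β * M0) * (n ^ 2 * Real.exp (-β * Γ)) := by
        have h7 := mul_le_mul_of_nonneg_left h5 (Real.exp_nonneg (β * M0))
        rw [← mul_assoc, ← Real.exp_add] at h7
        rw [show β * M0 + -β * M0 = 0 by ring, Real.exp_zero, one_mul] at h7
        exact h7
      have e5 : Real.exp (β * M0) * Real.exp (-β * Γ)
          = Real.exp (-δ * β) * Real.exp (-δ * β) := by
        rw [← Real.exp_add, ← Real.exp_add]
        congr 1
        rw [hδdef]; ring
      have h8 : d ^ 2 ≤ (n * Real.exp (-δ * β)) ^ 2 := by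
        calc d ^ 2 ≤ Real.exp (β * M0) * (n ^ 2 * Real.exp (-β * Γ)) := h6
          _ = (n * Real.exp (-δ * β)) ^ 2 := by
              rw [mul_pow, pow_two (Real.exp (-δ * β)), ← e5]; ring
      have h9 : |d| ≤ n * Real.exp (-δ * β) :=
        abs_le_of_sq_le_sq16 (by positivity) h8
      rw [abs_sub_comm] at h9
      exact h9
    have htel : hstar η - hstar r = ∑ i ∈ Finset.range L, (hstar (ω (i + 1)) - hstar (ω i)) := by
      rw [Finset.sum_range_sub (fun i => hstar (ω i)), hp.1, hp.2.1]
    have habs : |hstar r - hstar η| ≤ (L : ℝ) * (n * Real.exp (-δ * β)) := by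
      rw [abs_sub_comm, htel]
      calc |∑ i ∈ Finset.range L, (hstar (ω (i + 1)) - hstar (ω i))|
          ≤ ∑ i ∈ Finset.range L, |hstar (ω (i + 1)) - hstar (ω i)| :=
            Finset.abs_sum_le_sum_abs _ _
        _ ≤ ∑ _i ∈ Finset.range L, (n * Real.exp (-δ * β)) :=
            Finset.sum_le_sum fun i hi => hedge i (Finset.mem_range.mp hi)
        _ = (L : ℝ) * (n * Real.exp (-δ * β)) := by
            rw [Finset.sum_const, Finset.card_range, nsmul_eq_mul]
    refine le_trans habs ?_
    have hLc : (L : ℝ) ≤ (Lm : ℝ) := by exact_mod_cast hLle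
    have : (L : ℝ) * (n * Real.exp (-δ * β)) ≤ (Lm : ℝ) * (n * Real.exp (-δ * β)) :=
      mul_le_mul_of_nonneg_right hLc (by positivity)
    calc (L : ℝ) * (n * Real.exp (-δ * β)) ≤ (Lm : ℝ) * (n * Real.exp (-δ * β)) := this
      _ = n * Lm * Real.exp (-δ * β) := by ring
  constructor
  · intro η hη
    have hk := key sq η hη
    rw [hsq1] at hk
    have := le_abs_self (1 - hstar η)
    linarith
  · intro η hη
    have hk := key bx η hη
    rw [hbx0] at hk
    have h1 : hstar η ≤ |0 - hstar η| := by
      rw [zero_sub, abs_neg]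
      exact le_abs_self _
    linarith
end
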